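/- (Exchange Lemma) Let {f, g} be a coproduct structure on W (meaning f : A → W and g : C → W are maps such that (a,c) ↦ f(a) + g(c) is an isomorphism A ⊕ C ≅ W), and let {f^♯, g^♯} be the dual product structure (f^♯ f = 1, g^♯ g = 1, f^♯ g = 0, g^♯ f = 0). Then for a map h : D → W, the pair {f, h} is a coproduct structure on W if and only if g^♯ ∘ h : D → C is invertible. -/

import Mathlib

theorem stmt9 {k W A C D : Type*} [Field k]
    [AddCommGroup W] [Module k W] [AddCommGroup A] [Module k A]
    [AddCommGroup C] [Module k C] [AddCommGroup D] [Module k D]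
    (f : A →ₗ[k] W) (g : C →ₗ[k] W)
    (hco : Function.Bijective (f.coprod g))
    (fs : W →ₗ[k] A) (gs : W →ₗ[k] C)
    (hff : fs ∘ₗ f = LinearMap.id) (hgg : gs ∘ₗ g = LinearMap.id)
    (hfg : fs ∘ₗ g = 0) (hgf : gs ∘ₗ f = 0)
    (h : D →ₗ[k] W) :
    Function.Bijective (f.coprod h) ↔ Function.Bijective (gs ∘ₗ h) := by
  -- f ∘ fs + g ∘ gs = id
  have hsum : ∀ w : W, f (fs w) + g (gs w) = w := by
    intro w
    obtain ⟨⟨a, c⟩, rfl⟩ := hco.2 w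
    have e1 : fs (f a) = a := LinearMap.congr_fun hff a
    have e2 : fs (g c) = 0 := LinearMap.congr_fun hfg c
    have e3 : gs (g c) = c := LinearMap.congr_fun hgg c
    have e4 : gs (f a) = 0 := LinearMap.congr_fun hgf a
    have h1 : fs (f.coprod g (a, c)) = a := by
      simp [LinearMap.coprod_apply, map_add, e1, e2]
    have h2 : gs (f.coprod g (a, c)) = c := by
      simp [LinearMap.coprod_apply, map_add, e3, e4]
    rw [h1, h2]
    simp [LinearMap.coprod_apply]
  -- shear equivalence on A × D
  let S : (A × D) ≃ₗ[k] (A × D) := LinearEquiv.ofLinear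
    ((LinearMap.fst k A D + (fs ∘ₗ h) ∘ₗ LinearMap.snd k A D).prod (LinearMap.snd k A D))
    ((LinearMap.fst k A D - (fs ∘ₗ h) ∘ₗ LinearMap.snd k A D).prod (LinearMap.snd k A D))
    (by ext x <;> simp) (by ext x <;> simp)
  have key : ∀ x : A × D, f.coprod h x =
      (f.coprod g) ((LinearMap.id.prodMap (gs ∘ₗ h)) (S x)) := by
    rintro ⟨a, d⟩
    simp only [LinearEquiv.ofLinear_apply, LinearMap.prod_apply, LinearMap.coe_comp,
      Function.comp_apply, LinearMap.fst_apply, LinearMap.snd_apply, LinearMap.add_apply,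
      LinearMap.prodMap_apply, LinearMap.id_coe, id_eq, LinearMap.coprod_apply, Function.prod, S]
    rw [map_add]
    rw [add_assoc, hsum (h d)]
  have hfun : ⇑(f.coprod h) =
      ⇑(f.coprod g) ∘ ⇑(LinearMap.id.prodMap (gs ∘ₗ h)) ∘ ⇑S := funext key
  have hprod : ⇑(LinearMap.id (R := k) (M := A) |>.prodMap (gs ∘ₗ h)) =
      Prod.map (id : A → A) ⇑(gs ∘ₗ h) := by
    funext x; simp [LinearMap.prodMap_apply, Prod.map]
  rw [hfun]
  rw [Function.Bijective.of_comp_iff' hco, Function.Bijective.of_comp_iff _ S.bijective,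
    hprod, Prod.map_bijective]
  simp [Function.bijective_id]
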